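/- Let w, h, n, t, R be positive integers with w·h ≤ n. Let α = (α₁,…,α_t) be even positive integers with Σᵢ αᵢ = w·h. Let E = (M₁,…,M_w) be a fixed sequence where M_i is a perfect matching between the h positions of column i and the h positions of column i+1 (indices mod w). Consider assignments of labels from [n] to all w·h positions such that each column's tuple of h labels is R-multilinear; each matching edge joining a position with label a to a position with label b yields the labeled edge {a,b}. Then the number of such label assignments for which the multiset of w·h labeled edges contains exactly t distinct labeled edges with multiplicities α₁,…,α_t is at most (5Rw)^{wh} · (wh)³ · n^{t+h}. -/

import Mathlib

open Finset

/-- The cyclic successor of `i` in `Fin w`. -/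
def succW {w : ℕ} (i : Fin w) : Fin w := ⟨((i : ℕ) + 1) % w, Nat.mod_lt _ i.pos⟩

/-- A tuple is `R`-multilinear if no element of `[n]` occurs more than `R` times among
its coordinates. -/
def isMultilinearN {n R : ℕ} {ι : Type*} [Fintype ι] [DecidableEq ι]
    (I : ι → Fin n) : Prop :=
  ∀ a : Fin n, (Finset.univ.filter (fun t => I t = a)).card ≤ R

/-- The multiset of labeled edges of the matching cycle: for each column `i` and position
`t`, the unordered pair of the label at position `t` of column `i` and the label of its
match in column `i+1`. -/
def edgeMultiset {n w h : ℕ} (Mch : Fin w → Equiv.Perm (Fin h))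
    (f : Fin w → Fin h → Fin n) : Multiset (Sym2 (Fin n)) :=
  (Finset.univ : Finset (Fin w × Fin h)).val.map
    (fun p => Sym2.mk (f p.1 p.2) (f (succW p.1) (Mch p.1 p.2)))

-- Counting `R`-multilinear label assignments of a `w × h` matching cycle with a
-- prescribed edge-multiplicity profile `α₁,…,α_t`: there are at most
-- `(5Rw)^{wh} (wh)³ n^{t+h}` of them.
namespace MultCount

variable {w h n : ℕ} (hw : 0 < w) (hh : 0 < h)
variable (Mch : Fin w → Equiv.Perm (Fin h))

/-- `rho i` is the composition of the first `i` matchings. -/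
def rho : ℕ → Equiv.Perm (Fin h) :=
  fun i => Nat.rec 1 (fun i' r => Mch ⟨i' % w, Nat.mod_lt _ hw⟩ * r) i

variable (f g : Fin w → Fin h → Fin n)

/-- The label at linear index `m` (segment `m / w`, column `m % w`). -/
def lab (m : ℕ) : Fin n :=
  f ⟨m % w, Nat.mod_lt _ hw⟩ ((rho hw Mch (m % w)) ⟨m / w % h, Nat.mod_lt _ hh⟩)

/-- The step edge into index `m` (meaningful when `m % w ≠ 0`). -/
def eStep (m : ℕ) : Sym2 (Fin n) :=
  s(lab hw hh Mch f (m-1), lab hw hh Mch f m)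

/-- `m` is an "old-edge" index. -/
def oldm (m : ℕ) : Prop :=
  m % w ≠ 0 ∧ ∃ m' ∈ Finset.range m, m' % w ≠ 0 ∧
    eStep hw hh Mch f m' = eStep hw hh Mch f m

def slotLab (s : ℕ × Bool) : Fin n :=
  if s.2 then lab hw hh Mch f s.1 else lab hw hh Mch f (s.1 - 1)

def otherLab (s : ℕ × Bool) : Fin n :=
  if s.2 then lab hw hh Mch f (s.1 - 1) else lab hw hh Mch f s.1

def skey (s : ℕ × Bool) : ℕ := 2 * s.1 + s.2.toNat

open Classical in
/-- slots at indices `< m` carrying label `a`. -/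
noncomputable def aslots (a : Fin n) (m : ℕ) : Finset (ℕ × Bool) :=
  ((Finset.range m) ×ˢ (Finset.univ : Finset Bool)).filter
    (fun s => s.1 % w ≠ 0 ∧ slotLab hw hh Mch f s = a)

noncomputable def rank (A : Finset (ℕ × Bool)) (s : ℕ × Bool) : ℕ :=
  (A.filter (fun s' => skey s' < skey s)).card

open Classical in
noncomputable def aslotsE (m : ℕ) : Finset (ℕ × Bool) :=
  (aslots hw hh Mch f (lab hw hh Mch f (m-1)) m).filter
    (fun s => eStep hw hh Mch f s.1 = eStep hw hh Mch f m)

open Classical in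
noncomputable def cnt (m : ℕ) : ℕ :=
  ((Finset.range m).filter (fun m' => ¬ oldm hw hh Mch f m')).card


variable (R t : ℕ)

lemma aslotsE_nonempty {m : ℕ} (hm : oldm hw hh Mch f m) :
    (aslotsE hw hh Mch f m).Nonempty := by
  classical
  obtain ⟨hm0, m', hm', hm'0, he⟩ := hm
  by_cases hc : lab hw hh Mch f (m-1) = lab hw hh Mch f (m'-1)
  · refine ⟨(m', false), ?_⟩
    refine Finset.mem_filter.2 ⟨Finset.mem_filter.2 ⟨Finset.mem_product.2 ⟨hm', Finset.mem_univ _⟩, hm'0, by simp [slotLab, hc]⟩, he⟩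
  · refine ⟨(m', true), ?_⟩
    have hlab : lab hw hh Mch f (m-1) = lab hw hh Mch f m' := by
      have hmem : lab hw hh Mch f (m-1) ∈ eStep hw hh Mch f m' := by
        rw [he]; exact Sym2.mem_mk_left _ _
      rcases Sym2.mem_iff.1 hmem with h1 | h2
      · exact absurd h1 hc
      · exact h2
    refine Finset.mem_filter.2 ⟨Finset.mem_filter.2 ⟨Finset.mem_product.2 ⟨hm', Finset.mem_univ _⟩, hm'0, by simp [slotLab, hlab.symm]⟩, he⟩

open Classical in
/-- The word part of the encoding. -/
noncomputable def word (hRw : 0 < 2 * R * w) (m : ℕ) : Option (Fin (2 * R * w)) :=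
  if hm : oldm hw hh Mch f m then
    some ⟨(rank (aslots hw hh Mch f (lab hw hh Mch f (m-1)) m)
        (aslotsE_nonempty hw hh Mch f hm).choose) % (2 * R * w), Nat.mod_lt _ hRw⟩
  else none

open Classical in
/-- The payload: labels of the `none` indices, in order. -/
noncomputable def payload (hn : 0 < n) (s : Fin (t + h)) : Fin n :=
  if hex : ∃ m, m < h * w ∧ ¬ oldm hw hh Mch f m ∧ cnt hw hh Mch f m = (s : ℕ) then
    lab hw hh Mch f (Classical.choose hex)
  else ⟨0, hn⟩

include hw in
lemma pred_arith {m : ℕ} (hm : m % w ≠ 0) :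
    (m - 1) % w = m % w - 1 ∧ (m - 1) / w = m / w := by
  have h1 : 1 ≤ m % w := Nat.one_le_iff_ne_zero.2 hm
  have hd : w * (m / w) + m % w = m := Nat.div_add_mod m w
  have hm1 : m - 1 = w * (m / w) + (m % w - 1) := by omega
  constructor
  · rw [hm1, Nat.mul_add_mod]
    exact Nat.mod_eq_of_lt (by have := Nat.mod_lt m hw; omega)
  · rw [hm1, Nat.mul_add_div hw]
    have : (m % w - 1) / w = 0 := Nat.div_eq_of_lt (by have := Nat.mod_lt m hw; omega)
    omega

/-- linear index for a position. -/
def idxOf (p : Fin w × Fin h) : ℕ :=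
  (((rho hw Mch (p.1 : ℕ))⁻¹ p.2 : Fin h) : ℕ) * w + (p.1 : ℕ)

lemma idxOf_lt (p : Fin w × Fin h) : idxOf hw Mch p < h * w := by
  have h1 : (((rho hw Mch (p.1 : ℕ))⁻¹ p.2 : Fin h) : ℕ) ≤ h - 1 :=
    Nat.le_sub_one_of_lt (Fin.is_lt _)
  have h2 : (p.1 : ℕ) < w := p.1.is_lt
  unfold idxOf
  calc _ ≤ (h-1) * w + (p.1:ℕ) := by
        exact Nat.add_le_add_right (Nat.mul_le_mul_right w h1) _
    _ < (h-1) * w + w := by omega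
    _ = h * w := by cases h with | zero => omega | succ h' => simp [Nat.succ_mul]

include hw in
lemma mod_div_aux (a b : ℕ) (hb : b < w) : (a * w + b) % w = b ∧ (a * w + b) / w = a := by
  rw [mul_comm, Nat.mul_add_mod, Nat.mul_add_div hw, Nat.mod_eq_of_lt hb, Nat.div_eq_of_lt hb]
  omega

lemma idxOf_mod (p : Fin w × Fin h) : idxOf hw Mch p % w = (p.1 : ℕ) :=
  (mod_div_aux hw _ _ p.1.is_lt).1


lemma idxOf_div (p : Fin w × Fin h) : idxOf hw Mch p / w = (((rho hw Mch (p.1 : ℕ))⁻¹ p.2 : Fin h) : ℕ) :=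
  (mod_div_aux hw _ _ p.1.is_lt).2

lemma lab_mk (i j : ℕ) (hi : i < w) (hj : j < h) :
    lab hw hh Mch f (j * w + i) = f ⟨i, hi⟩ ((rho hw Mch i) ⟨j, hj⟩) := by
  have e1 := (mod_div_aux hw j i hi).1
  have e2 := (mod_div_aux hw j i hi).2
  unfold lab
  have A : (⟨(j*w+i) % w, Nat.mod_lt _ hw⟩ : Fin w) = ⟨i, hi⟩ := Fin.ext e1
  have B : (⟨(j*w+i) / w % h, Nat.mod_lt _ hh⟩ : Fin h) = ⟨j, hj⟩ :=
    Fin.ext (by rw [e2]; exact Nat.mod_eq_of_lt hj)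
  rw [A, B, e1]

lemma lab_idxOf (p : Fin w × Fin h) : lab hw hh Mch f (idxOf hw Mch p) = f p.1 p.2 := by
  have hlm := lab_mk hw hh Mch f (p.1 : ℕ) (((rho hw Mch (p.1 : ℕ))⁻¹ p.2 : Fin h) : ℕ)
    p.1.is_lt (Fin.is_lt _)
  unfold idxOf
  rw [hlm]
  simp

lemma eStep_mem {m : ℕ} (hm : m < h * w) (hm0 : m % w ≠ 0) :
    eStep hw hh Mch f m ∈ edgeMultiset Mch f := by
  set i := m % w with hi
  set j := m / w with hj
  have hiw : i < w := Nat.mod_lt _ hw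
  have hi1 : 1 ≤ i := Nat.one_le_iff_ne_zero.2 hm0
  have hjh : j < h := Nat.div_lt_of_lt_mul (by rw [mul_comm w h]; omega)
  have hi1w : i - 1 < w := by omega
  have hmeq : m = j * w + i := by
    have hdm := Nat.div_add_mod m w
    rw [← hj, ← hi] at hdm
    rw [mul_comm j w]
    omega
  have hm1eq : m - 1 = j * w + (i - 1) := by omega
  set p : Fin w × Fin h := (⟨i - 1, hi1w⟩, rho hw Mch (i-1) ⟨j, hjh⟩) with hp
  have h1 : f p.1 p.2 = lab hw hh Mch f (m - 1) := by
    rw [hm1eq, lab_mk hw hh Mch f (i-1) j hi1w hjh]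
  have hsucc : succW p.1 = (⟨i, hiw⟩ : Fin w) := by
    apply Fin.ext
    simp only [succW, hp]
    show (i - 1 + 1) % w = i
    rw [Nat.sub_add_cancel hi1]
    exact Nat.mod_eq_of_lt hiw
  have hrho : Mch p.1 p.2 = rho hw Mch i ⟨j, hjh⟩ := by
    have hieq : i = (i - 1) + 1 := by omega
    rw [hieq]
    show Mch p.1 p.2 = (Mch ⟨(i-1) % w, Nat.mod_lt _ hw⟩ * rho hw Mch (i-1)) ⟨j, hjh⟩
    have : (⟨(i-1) % w, Nat.mod_lt _ hw⟩ : Fin w) = ⟨i - 1, hi1w⟩ :=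
      Fin.ext (Nat.mod_eq_of_lt hi1w)
    rw [this]
    rfl
  have h2 : f (succW p.1) (Mch p.1 p.2) = lab hw hh Mch f m := by
    rw [hsucc, hrho]
    conv_rhs => rw [hmeq, lab_mk hw hh Mch f i j hiw hjh]
  refine Multiset.mem_map.2 ⟨p, ?_, ?_⟩
  · simp
  · rw [h1, h2]; rfl

include hw hh in
lemma lab_occ_card (hml : ∀ i, isMultilinearN (R := R) (f i)) (a : Fin n) :
    ((Finset.range (h*w)).filter (fun m => lab hw hh Mch f m = a)).card ≤ w * R := by
  classical
  have step1 : ((Finset.range (h*w)).filter (fun m => lab hw hh Mch f m = a)).card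
      ≤ ((Finset.univ : Finset (Fin w × Fin h)).filter (fun p => f p.1 p.2 = a)).card := by
    apply Finset.card_le_card_of_injOn
      (fun m => (⟨m % w, Nat.mod_lt _ hw⟩, rho hw Mch (m % w) ⟨m / w % h, Nat.mod_lt _ hh⟩))
    · intro m hm
      simp only [Finset.mem_coe, Finset.mem_filter, Finset.mem_range] at hm
      simp only [Finset.mem_coe, Finset.mem_filter, Finset.mem_univ, true_and]
      exact hm.2
    · intro m₁ h₁ m₂ h₂ heq
      simp only [Finset.coe_filter, Set.mem_setOf_eq, Finset.mem_range] at h₁ h₂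
      have e1 : m₁ % w = m₂ % w := congrArg (fun q => (q.1 : ℕ)) heq
      have e2 : rho hw Mch (m₁ % w) ⟨m₁ / w % h, Nat.mod_lt _ hh⟩
          = rho hw Mch (m₂ % w) ⟨m₂ / w % h, Nat.mod_lt _ hh⟩ := congrArg Prod.snd heq
      rw [e1] at e2
      have e3 : m₁ / w % h = m₂ / w % h := by
        have := (rho hw Mch (m₂ % w)).injective e2
        exact congrArg Fin.val this
      have d1 : m₁ / w < h := Nat.div_lt_of_lt_mul (by rw [mul_comm w h]; omega)
      have d2 : m₂ / w < h := Nat.div_lt_of_lt_mul (by rw [mul_comm w h]; omega)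
      rw [Nat.mod_eq_of_lt d1, Nat.mod_eq_of_lt d2] at e3
      have f1 := Nat.div_add_mod m₁ w
      have f2 := Nat.div_add_mod m₂ w
      rw [← f1, ← f2, e1, e3]
  have step2 : ((Finset.univ : Finset (Fin w × Fin h)).filter (fun p => f p.1 p.2 = a)).card
      ≤ w * R := by
    rw [Finset.card_filter]
    rw [Fintype.sum_prod_type]
    have hcol : ∀ i : Fin w, (∑ y : Fin h, if f i y = a then 1 else 0) ≤ R := by
      intro i
      rw [← Finset.card_filter]
      exact hml i a
    calc (∑ i : Fin w, ∑ y : Fin h, if f i y = a then 1 else 0)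
        ≤ ∑ _i : Fin w, R := Finset.sum_le_sum (fun i _ => hcol i)
      _ = w * R := by simp [Finset.sum_const, Finset.card_univ, mul_comm]
  exact le_trans step1 step2

include hw hh in
lemma aslots_card (hml : ∀ i, isMultilinearN (R := R) (f i)) (a : Fin n)
    {m : ℕ} (hm : m ≤ h * w) :
    (aslots hw hh Mch f a m).card ≤ 2 * (w * R) := by
  classical
  set A := aslots hw hh Mch f a m with hA
  set φ : ℕ × Bool → ℕ := fun s => if s.2 then s.1 else s.1 - 1 with hφ
  have hfib : ∀ b ∈ A.image φ, (A.filter (fun s => φ s = b)).card ≤ 2 := by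
    intro b _
    have hsub : A.filter (fun s => φ s = b) ⊆ {(b, true), (b + 1, false)} := by
      intro s hs
      simp only [Finset.mem_filter] at hs
      obtain ⟨hsA, hsb⟩ := hs
      have hs1 : s.1 % w ≠ 0 := (Finset.mem_filter.1 hsA).2.1
      have hs1pos : 0 < s.1 := by
        rcases Nat.eq_zero_or_pos s.1 with h0 | h0
        · exact absurd (by simp [h0]) hs1
        · exact h0
      rcases Bool.eq_false_or_eq_true s.2 with h2 | h2
      · have hb : s.1 = b := by simpa [hφ, h2] using hsb
        have : s = (b, true) := by
          apply Prod.ext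
          · simp [hb]
          · simp [h2]
        simp [this]
      · have hb : s.1 - 1 = b := by simpa [hφ, h2] using hsb
        have : s = (b + 1, false) := by
          apply Prod.ext
          · simp; omega
          · simp [h2]
        simp [this]
    calc (A.filter (fun s => φ s = b)).card ≤ ({(b, true), (b + 1, false)} : Finset (ℕ × Bool)).card :=
          Finset.card_le_card hsub
      _ ≤ 2 := Finset.card_insert_le _ _ |>.trans (by simp)
  have himg : A.image φ ⊆ (Finset.range (h*w)).filter (fun m' => lab hw hh Mch f m' = a) := by
    intro b hb
    obtain ⟨s, hsA, hsb⟩ := Finset.mem_image.1 hb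
    have hmem := Finset.mem_filter.1 hsA
    have hrange : s.1 < m := Finset.mem_range.1 (Finset.mem_product.1 hmem.1).1
    obtain ⟨hs1, hslab⟩ := hmem.2
    simp only [Finset.mem_filter, Finset.mem_range]
    rcases Bool.eq_false_or_eq_true s.2 with h2 | h2
    · have hb' : b = s.1 := by rw [← hsb]; simp [hφ, h2]
      refine ⟨by omega, ?_⟩
      rw [hb']
      simpa [slotLab, h2] using hslab
    · have hb' : b = s.1 - 1 := by rw [← hsb]; simp [hφ, h2]
      refine ⟨by omega, ?_⟩
      rw [hb']
      simpa [slotLab, h2] using hslab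
  calc A.card ≤ 2 * (A.image φ).card := Finset.card_le_mul_card_image A 2 hfib
    _ ≤ 2 * (w * R) := by
        have := Finset.card_le_card himg
        have := lab_occ_card hw hh Mch f R hml a
        omega

lemma skey_inj (s₁ s₂ : ℕ × Bool) (hk : skey s₁ = skey s₂) : s₁ = s₂ := by
  obtain ⟨m₁, b₁⟩ := s₁
  obtain ⟨m₂, b₂⟩ := s₂
  simp only [skey] at hk
  cases b₁ <;> cases b₂ <;> simp_all <;> omega

lemma rank_lt_card {A : Finset (ℕ × Bool)} {s : ℕ × Bool} (hs : s ∈ A) :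
    rank A s < A.card := by
  classical
  have hsub : A.filter (fun s' => skey s' < skey s) ⊆ A.erase s := by
    intro s' hs'
    have := Finset.mem_filter.1 hs'
    exact Finset.mem_erase.2 ⟨fun he => by simp [he] at this, this.1⟩
  calc rank A s ≤ (A.erase s).card := Finset.card_le_card hsub
    _ < A.card := Finset.card_erase_lt_of_mem hs

lemma rank_injOn {A : Finset (ℕ × Bool)} {s₁ s₂ : ℕ × Bool} (h₁ : s₁ ∈ A) (h₂ : s₂ ∈ A)
    (hr : rank A s₁ = rank A s₂) : s₁ = s₂ := by
  classical
  by_contra hne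
  have hkey : skey s₁ ≠ skey s₂ := fun hk => hne (skey_inj _ _ hk)
  wlog hlt : skey s₁ < skey s₂ generalizing s₁ s₂
  · exact this h₂ h₁ hr.symm (Ne.symm hne) (fun hk => hne (skey_inj _ _ hk).symm) (by omega)
  have hsub : A.filter (fun s' => skey s' < skey s₁) ⊆ A.filter (fun s' => skey s' < skey s₂) := by
    intro s' hs'
    have := Finset.mem_filter.1 hs'
    exact Finset.mem_filter.2 ⟨this.1, this.2.trans hlt⟩
  have hwit : s₁ ∈ A.filter (fun s' => skey s' < skey s₂) ∧
      s₁ ∉ A.filter (fun s' => skey s' < skey s₁) := by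
    constructor
    · exact Finset.mem_filter.2 ⟨h₁, hlt⟩
    · intro hc
      exact absurd (Finset.mem_filter.1 hc).2 (lt_irrefl _)
  have hss : A.filter (fun s' => skey s' < skey s₁) ⊂ A.filter (fun s' => skey s' < skey s₂) :=
    (Finset.ssubset_iff_of_subset hsub).2 ⟨s₁, hwit.1, hwit.2⟩
  have := Finset.card_lt_card hss
  simp only [rank] at hr
  omega

lemma other_correct {m : ℕ} {s : ℕ × Bool}
    (hs : s ∈ aslotsE hw hh Mch f m) :
    otherLab hw hh Mch f s = lab hw hh Mch f m := by
  classical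
  have h1 := Finset.mem_filter.1 hs
  have hedge : eStep hw hh Mch f s.1 = eStep hw hh Mch f m := h1.2
  have h2 := (Finset.mem_filter.1 h1.1).2
  have hslab : slotLab hw hh Mch f s = lab hw hh Mch f (m-1) := h2.2
  have hedge' : s(lab hw hh Mch f (s.1-1), lab hw hh Mch f s.1)
      = s(lab hw hh Mch f (m-1), lab hw hh Mch f m) := hedge
  rcases Bool.eq_false_or_eq_true s.2 with h3 | h3
  · -- s.2 = true : slot label is lab s.1, other is lab (s.1 - 1)
    have hx : lab hw hh Mch f s.1 = lab hw hh Mch f (m-1) := by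
      simpa [slotLab, h3] using hslab
    rw [hx, Sym2.eq_swap] at hedge'
    have := Sym2.congr_right.1 hedge'
    simpa [otherLab, h3] using this
  · have hx : lab hw hh Mch f (s.1-1) = lab hw hh Mch f (m-1) := by
      simpa [slotLab, h3] using hslab
    rw [hx] at hedge'
    have := Sym2.congr_right.1 hedge'
    simpa [otherLab, h3] using this

include hw hh in
lemma oldm_congr {m : ℕ}
    (hlab : ∀ m' < m, lab hw hh Mch f m' = lab hw hh Mch g m') {m' : ℕ} (hm' : m' < m) :
    (oldm hw hh Mch f m' ↔ oldm hw hh Mch g m') := by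
  have hstep : ∀ m'' ≤ m', eStep hw hh Mch f m'' = eStep hw hh Mch g m'' := by
    intro m'' hm''
    unfold eStep
    rw [hlab m'' (by omega), hlab (m''-1) (by omega)]
  unfold oldm
  constructor
  · rintro ⟨ha, m'', hm'', hb, hc⟩
    exact ⟨ha, m'', hm'', hb, by
      rw [← hstep m'' (le_of_lt (Finset.mem_range.1 hm'')), ← hstep m' (le_refl _)]; exact hc⟩
  · rintro ⟨ha, m'', hm'', hb, hc⟩
    exact ⟨ha, m'', hm'', hb, by
      rw [hstep m'' (le_of_lt (Finset.mem_range.1 hm'')), hstep m' (le_refl _)]; exact hc⟩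

include hw hh in
lemma cnt_congr {m : ℕ}
    (hlab : ∀ m' < m, lab hw hh Mch f m' = lab hw hh Mch g m') :
    cnt hw hh Mch f m = cnt hw hh Mch g m := by
  classical
  unfold cnt
  congr 1
  apply Finset.filter_congr
  intro m' hm'
  have := oldm_congr hw hh Mch f g hlab (Finset.mem_range.1 hm')
  simp [this]

include hw hh in
lemma starts_card : ((Finset.range (h*w)).filter (fun m => m % w = 0)).card = h := by
  classical
  have himg : (Finset.range (h*w)).filter (fun m => m % w = 0)
      = (Finset.range h).image (fun j => j * w) := by
    ext m
    simp only [Finset.mem_filter, Finset.mem_range, Finset.mem_image]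
    constructor
    · rintro ⟨hlt, hmod⟩
      refine ⟨m / w, ?_, ?_⟩
      · exact Nat.div_lt_of_lt_mul (by rw [mul_comm w h]; omega)
      · have := Nat.div_add_mod m w
        rw [mul_comm]
        omega
    · rintro ⟨j, hj, rfl⟩
      constructor
      · exact Nat.mul_lt_mul_of_pos_right hj hw
      · simp [Nat.mul_mod_left]
  rw [himg, Finset.card_image_of_injective _ (fun a b hab => by
    have : a * w = b * w := hab
    exact Nat.eq_of_mul_eq_mul_right hw this)]
  exact Finset.card_range h

open Classical in
include hw hh in
lemma fresh_card (hT : (edgeMultiset Mch f).toFinset.card = t) :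
    ((Finset.range (h*w)).filter
      (fun m => m % w ≠ 0 ∧ ¬ oldm hw hh Mch f m)).card ≤ t := by
  classical
  rw [← hT]
  apply Finset.card_le_card_of_injOn (fun m => eStep hw hh Mch f m)
  · intro m hm
    simp only [Finset.mem_coe, Finset.mem_filter, Finset.mem_range] at hm
    exact Multiset.mem_toFinset.2 (eStep_mem hw hh Mch f hm.1 hm.2.1)
  · intro m₁ h₁ m₂ h₂ heq
    simp only [Finset.coe_filter, Set.mem_setOf_eq, Finset.mem_range] at h₁ h₂
    by_contra hne
    rcases Nat.lt_or_ge m₁ m₂ with hlt | hge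
    · exact h₂.2.2 ⟨h₂.2.1, m₁, Finset.mem_range.2 hlt, h₁.2.1, heq⟩
    · have hlt : m₂ < m₁ := by omega
      exact h₁.2.2 ⟨h₁.2.1, m₂, Finset.mem_range.2 hlt, h₂.2.1, heq.symm⟩

open Classical in
include hw hh in
lemma none_total (hT : (edgeMultiset Mch f).toFinset.card = t) :
    ((Finset.range (h*w)).filter (fun m => ¬ oldm hw hh Mch f m)).card ≤ t + h := by
  classical
  have hsplit : (Finset.range (h*w)).filter (fun m => ¬ oldm hw hh Mch f m)
      ⊆ ((Finset.range (h*w)).filter (fun m => m % w = 0)) ∪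
        ((Finset.range (h*w)).filter (fun m => m % w ≠ 0 ∧ ¬ oldm hw hh Mch f m)) := by
    intro m hm
    have := Finset.mem_filter.1 hm
    rcases Nat.eq_zero_or_pos (m % w) with h0 | h0
    · exact Finset.mem_union_left _ (Finset.mem_filter.2 ⟨this.1, h0⟩)
    · exact Finset.mem_union_right _ (Finset.mem_filter.2 ⟨this.1, by omega, this.2⟩)
  calc ((Finset.range (h*w)).filter (fun m => ¬ oldm hw hh Mch f m)).card
      ≤ _ := Finset.card_le_card hsplit
    _ ≤ ((Finset.range (h*w)).filter (fun m => m % w = 0)).card +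
        ((Finset.range (h*w)).filter (fun m => m % w ≠ 0 ∧ ¬ oldm hw hh Mch f m)).card :=
        Finset.card_union_le _ _
    _ ≤ t + h := by
        have h1 := starts_card (w:=w) (h:=h) hw hh
        have h2 := fresh_card hw hh Mch f t hT
        omega

open Classical in
include hw hh in
lemma cnt_mono {m₁ m₂ : ℕ} (hlt : m₁ < m₂) (hm₁ : ¬ oldm hw hh Mch f m₁) :
    cnt hw hh Mch f m₁ < cnt hw hh Mch f m₂ := by
  classical
  unfold cnt
  apply Finset.card_lt_card
  apply (Finset.ssubset_iff_of_subset ?_).2 ?_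
  · apply Finset.filter_subset_filter
    intro x hx
    exact Finset.mem_range.2 (lt_trans (Finset.mem_range.1 hx) hlt)
  · exact ⟨m₁, Finset.mem_filter.2 ⟨Finset.mem_range.2 hlt, hm₁⟩,
      fun hc => by simp at hc⟩

open Classical in
include hw hh in
lemma cnt_lt (hT : (edgeMultiset Mch f).toFinset.card = t) {m : ℕ} (hm : m < h*w)
    (hnm : ¬ oldm hw hh Mch f m) : cnt hw hh Mch f m < t + h := by
  classical
  have h1 : cnt hw hh Mch f m < cnt hw hh Mch f (h*w) := cnt_mono hw hh Mch f hm hnm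
  have h2 : cnt hw hh Mch f (h*w) ≤ t + h := none_total hw hh Mch f t hT
  omega

open Classical in
include hw hh in
lemma payload_spec {t : ℕ} (hn : 0 < n) (hT : (edgeMultiset Mch f).toFinset.card = t)
    {m : ℕ} (hm : m < h*w) (hnm : ¬ oldm hw hh Mch f m) :
    payload hw hh Mch f t hn ⟨cnt hw hh Mch f m, cnt_lt hw hh Mch f t hT hm hnm⟩
      = lab hw hh Mch f m := by
  classical
  unfold payload
  have hex : ∃ m', m' < h * w ∧ ¬ oldm hw hh Mch f m' ∧
      cnt hw hh Mch f m' = ((⟨cnt hw hh Mch f m, cnt_lt hw hh Mch f t hT hm hnm⟩ : Fin (t+h)) : ℕ) :=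
    ⟨m, hm, hnm, rfl⟩
  rw [dif_pos hex]
  obtain ⟨hc1, hc2, hc3⟩ := Classical.choose_spec hex
  have : Classical.choose hex = m := by
    by_contra hne
    rcases Nat.lt_or_ge (Classical.choose hex) m with hlt | hge
    · have := cnt_mono hw hh Mch f hlt hc2
      simp at hc3
      omega
    · have hlt : m < Classical.choose hex := by omega
      have := cnt_mono hw hh Mch f hlt hnm
      simp at hc3
      omega
  rw [this]

open Classical in
include hw hh in
lemma lab_inj (hn : 0 < n) (hRw : 0 < 2 * R * w)
    (hml_f : ∀ i, isMultilinearN (R := R) (f i))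
    (hml_g : ∀ i, isMultilinearN (R := R) (g i))
    (hT_f : (edgeMultiset Mch f).toFinset.card = t)
    (hT_g : (edgeMultiset Mch g).toFinset.card = t)
    (hword : ∀ m, m < h*w → word hw hh Mch f R hRw m = word hw hh Mch g R hRw m)
    (hpay : payload hw hh Mch f t hn = payload hw hh Mch g t hn) :
    ∀ m, m < h*w → lab hw hh Mch f m = lab hw hh Mch g m := by
  intro m
  induction m using Nat.strong_induction_on with
  | _ m IH =>
    intro hm
    have hword_m := hword m hm
    by_cases ho : oldm hw hh Mch f m
    · -- old-edge step
      have hog : oldm hw hh Mch g m := by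
        by_contra hog
        rw [word, dif_pos ho, word, dif_neg hog] at hword_m
        exact Option.some_ne_none _ hword_m
      have hm0 : m % w ≠ 0 := ho.1
      have hmpos : 0 < m := by
        rcases Nat.eq_zero_or_pos m with h0 | h0
        · exact absurd (by simp [h0]) hm0
        · exact h0
      have ha : lab hw hh Mch f (m-1) = lab hw hh Mch g (m-1) :=
        IH (m-1) (by omega) (by omega)
      have hslot : ∀ s : ℕ × Bool, s.1 < m →
          slotLab hw hh Mch f s = slotLab hw hh Mch g s := by
        intro s hs
        rcases Bool.eq_false_or_eq_true s.2 with h2 | h2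
        · simp only [slotLab, h2, if_pos]
          exact IH s.1 hs (by omega)
        · simp only [slotLab, h2]
          simp only [Bool.false_eq_true, if_false]
          exact IH (s.1 - 1) (by omega) (by omega)
      have hA : aslots hw hh Mch f (lab hw hh Mch f (m-1)) m
          = aslots hw hh Mch g (lab hw hh Mch g (m-1)) m := by
        unfold aslots
        apply Finset.filter_congr
        intro s hs
        have hs1 : s.1 < m := Finset.mem_range.1 (Finset.mem_product.1 hs).1
        rw [hslot s hs1, ha]
      set sf := (aslotsE_nonempty hw hh Mch f ho).choose with hsf
      set sg := (aslotsE_nonempty hw hh Mch g hog).choose with hsg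
      have hsf_mem : sf ∈ aslotsE hw hh Mch f m := (aslotsE_nonempty hw hh Mch f ho).choose_spec
      have hsg_mem : sg ∈ aslotsE hw hh Mch g m := (aslotsE_nonempty hw hh Mch g hog).choose_spec
      have hsf_as : sf ∈ aslots hw hh Mch f (lab hw hh Mch f (m-1)) m :=
        (Finset.mem_filter.1 hsf_mem).1
      have hsg_as : sg ∈ aslots hw hh Mch g (lab hw hh Mch g (m-1)) m :=
        (Finset.mem_filter.1 hsg_mem).1
      have hcard_f : (aslots hw hh Mch f (lab hw hh Mch f (m-1)) m).card ≤ 2*(w*R) :=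
        aslots_card hw hh Mch f R hml_f _ (le_of_lt hm)
      have hcard_g : (aslots hw hh Mch g (lab hw hh Mch g (m-1)) m).card ≤ 2*(w*R) :=
        aslots_card hw hh Mch g R hml_g _ (le_of_lt hm)
      have hrank_f_lt : rank (aslots hw hh Mch f (lab hw hh Mch f (m-1)) m) sf < 2*R*w := by
        have := rank_lt_card hsf_as
        rw [show 2*R*w = 2*(w*R) by ring]
        omega
      have hrank_g_lt : rank (aslots hw hh Mch g (lab hw hh Mch g (m-1)) m) sg < 2*R*w := by
        have := rank_lt_card hsg_as
        rw [show 2*R*w = 2*(w*R) by ring]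
        omega
      have hrank_eq : rank (aslots hw hh Mch f (lab hw hh Mch f (m-1)) m) sf
          = rank (aslots hw hh Mch g (lab hw hh Mch g (m-1)) m) sg := by
        rw [word, dif_pos ho, word, dif_pos hog] at hword_m
        have := Option.some.inj hword_m
        have hv := congrArg Fin.val this
        simp only at hv
        rw [Nat.mod_eq_of_lt hrank_f_lt, Nat.mod_eq_of_lt hrank_g_lt] at hv
        exact hv
      have hsfsg : sf = sg := by
        apply rank_injOn (A := aslots hw hh Mch g (lab hw hh Mch g (m-1)) m)
          (hA ▸ hsf_as) hsg_as
        rw [← hA]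
        rw [hrank_eq, hA]
      have e1 : otherLab hw hh Mch f sf = lab hw hh Mch f m := other_correct hw hh Mch f hsf_mem
      have e2 : otherLab hw hh Mch g sg = lab hw hh Mch g m := other_correct hw hh Mch g hsg_mem
      have hsf1 : sf.1 < m := by
        have := Finset.mem_range.1 (Finset.mem_product.1 (Finset.mem_filter.1 hsf_as).1).1
        exact this
      have e3 : otherLab hw hh Mch f sf = otherLab hw hh Mch g sf := by
        rcases Bool.eq_false_or_eq_true sf.2 with h2 | h2
        · simp only [otherLab, h2, if_pos]
          exact IH (sf.1 - 1) (by omega) (by omega)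
        · simp only [otherLab, h2]
          simp only [Bool.false_eq_true, if_false]
          exact IH sf.1 hsf1 (by omega)
      rw [← e1, ← e2, ← hsfsg, e3]
    · -- payload step
      have hog : ¬ oldm hw hh Mch g m := by
        intro hog
        rw [word, dif_neg ho, word, dif_pos hog] at hword_m
        exact Option.some_ne_none _ hword_m.symm
      have hlabm' : ∀ m' < m, lab hw hh Mch f m' = lab hw hh Mch g m' :=
        fun m' h' => IH m' h' (by omega)
      have hcnt : cnt hw hh Mch f m = cnt hw hh Mch g m := cnt_congr hw hh Mch f g hlabm'
      have pf := payload_spec hw hh Mch f hn hT_f hm ho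
      have pg := payload_spec hw hh Mch g hn hT_g hm hog
      rw [← pf, ← pg, hpay]
      congr 1
      exact Fin.ext hcnt

include hw hh in
lemma eq_of_lab_eq (hlab : ∀ m, m < h*w → lab hw hh Mch f m = lab hw hh Mch g m) :
    f = g := by
  funext i j
  have h1 := lab_idxOf hw hh Mch f (i, j)
  have h2 := lab_idxOf hw hh Mch g (i, j)
  rw [← h1, ← h2]
  exact hlab _ (idxOf_lt hw Mch (i, j))

end MultCount

open MultCount in
open Classical in
theorem count_labelings_with_multiplicities
    (w h n t R : ℕ) (hw : 0 < w) (hh : 0 < h) (hn : 0 < n) (ht : 0 < t) (hR : 0 < R)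
    (hwh : w * h ≤ n)
    (α : Fin t → ℕ) (hαeven : ∀ i, Even (α i)) (hαpos : ∀ i, 0 < α i)
    (hsum : ∑ i, α i = w * h)
    (Mch : Fin w → Equiv.Perm (Fin h)) :
    (((Finset.univ : Finset (Fin w → Fin h → Fin n)).filter (fun f : Fin w → Fin h → Fin n =>
        (∀ i : Fin w, isMultilinearN (R := R) (f i)) ∧
        (edgeMultiset Mch f).toFinset.val.map
            (fun e => (edgeMultiset Mch f).count e) =
          (Finset.univ : Finset (Fin t)).val.map α)).card : ℝ)
      ≤ (5 * R * w : ℝ) ^ (w * h) * ((w * h : ℝ)) ^ 3 * (n : ℝ) ^ (t + h) := by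

  classical
  have hRw : 0 < 2 * R * w := by positivity
  set S := ((Finset.univ : Finset (Fin w → Fin h → Fin n)).filter
      (fun f : Fin w → Fin h → Fin n =>
        (∀ i : Fin w, isMultilinearN (R := R) (f i)) ∧
        (edgeMultiset Mch f).toFinset.val.map
            (fun e => (edgeMultiset Mch f).count e) =
          (Finset.univ : Finset (Fin t)).val.map α)) with hS
  -- from the multiplicity condition, the number of distinct edges is t
  have hT : ∀ f ∈ S, (edgeMultiset Mch f).toFinset.card = t := by
    intro f hf
    have hf2 := (Finset.mem_filter.1 hf).2.2
    have hcard := congrArg Multiset.card hf2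
    rw [Multiset.card_map, Multiset.card_map] at hcard
    simpa [Multiset.card_toFinset] using hcard
  have hml : ∀ f ∈ S, ∀ i : Fin w, isMultilinearN (R := R) (f i) :=
    fun f hf => (Finset.mem_filter.1 hf).2.1
  -- the encoding
  set Enc : (Fin w → Fin h → Fin n) →
      ((Fin (h*w) → Option (Fin (2*R*w))) × (Fin (t+h) → Fin n)) :=
    fun f => (fun m => word hw hh Mch f R hRw (m : ℕ), payload hw hh Mch f t hn) with hEnc
  have hinj : Set.InjOn Enc ↑S := by
    intro f hf g hg heq
    have hword : ∀ m, m < h*w → word hw hh Mch f R hRw m = word hw hh Mch g R hRw m := by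
      intro m hm
      have := congrFun (congrArg Prod.fst heq) ⟨m, hm⟩
      simpa using this
    have hpay : payload hw hh Mch f t hn = payload hw hh Mch g t hn :=
      congrArg Prod.snd heq
    exact eq_of_lab_eq hw hh Mch f g
      (lab_inj hw hh Mch f g R t hn hRw (hml f hf) (hml g hg) (hT f hf) (hT g hg) hword hpay)
  have hcount : S.card ≤ (2*R*w+1)^(h*w) * n^(t+h) := by
    have := Finset.card_le_card_of_injOn Enc (fun f _ => Finset.mem_univ (Enc f)) hinj
    calc S.card ≤ (Finset.univ :
          Finset ((Fin (h*w) → Option (Fin (2*R*w))) × (Fin (t+h) → Fin n))).card := this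
      _ = (2*R*w+1)^(h*w) * n^(t+h) := by
          rw [Finset.card_univ, Fintype.card_prod, Fintype.card_fun, Fintype.card_fun,
            Fintype.card_option, Fintype.card_fin, Fintype.card_fin, Fintype.card_fin,
            Fintype.card_fin]
  -- move to the reals
  have hreal : (S.card : ℝ) ≤ ((2*R*w+1 : ℕ) : ℝ)^(h*w) * ((n : ℕ) : ℝ)^(t+h) := by
    have := hcount
    exact_mod_cast this
  have hR1 : (1 : ℝ) ≤ (R : ℝ) := by exact_mod_cast hR
  have hw1 : (1 : ℝ) ≤ (w : ℝ) := by exact_mod_cast hw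
  have hh1 : (1 : ℝ) ≤ (h : ℝ) := by exact_mod_cast hh
  have hbase : ((2*R*w+1 : ℕ) : ℝ) ≤ (5 * R * w : ℝ) := by
    push_cast
    nlinarith
  have hpow : ((2*R*w+1 : ℕ) : ℝ)^(h*w) ≤ (5 * R * w : ℝ)^(w*h) := by
    rw [mul_comm h w]
    exact pow_le_pow_left₀ (by positivity) hbase (w*h)
  have hwh1 : (1 : ℝ) ≤ ((w * h : ℝ))^3 := by
    have h1 : (1:ℝ) ≤ (w:ℝ) * (h:ℝ) := by nlinarith
    calc (1:ℝ) = 1^3 := by norm_num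
      _ ≤ ((w:ℝ) * (h:ℝ))^3 := pow_le_pow_left₀ (by norm_num) h1 3
  calc (S.card : ℝ) ≤ ((2*R*w+1 : ℕ) : ℝ)^(h*w) * (n : ℝ)^(t+h) := by exact_mod_cast hreal
    _ ≤ (5 * R * w : ℝ)^(w*h) * (n : ℝ)^(t+h) :=
        mul_le_mul_of_nonneg_right hpow (by positivity)
    _ ≤ (5 * R * w : ℝ)^(w*h) * ((w * h : ℝ))^3 * (n : ℝ)^(t+h) := by
        have h1 : (0:ℝ) ≤ (5 * R * w : ℝ)^(w*h) := by positivity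
        have h2 : (0:ℝ) ≤ (n : ℝ)^(t+h) := by positivity
        nlinarith [mul_nonneg h1 h2]
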